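/- Let K be a division ring, S an endomorphism, D an S-derivation, and a ∈ K. Define Tₐ : K → K by Tₐ(x) = S(x)a + D(x). Then for any f(t) = Σ aᵢtⁱ ∈ K[t;S,D] and any nonzero x ∈ K, f(Tₐ)(x) = f(a^x)·x, where f(Tₐ) means Σ aᵢ·Tₐⁱ and f(b) denotes right evaluation of f at b. -/

import Mathlib

/-- The `(S,D)`-conjugate `a^c := S(c)·a·c⁻¹ + D(c)·c⁻¹`. -/
def sdConj {K : Type*} [DivisionRing K] (S : K →+* K) (D : K →+ K) (a c : K) : K :=
  S c * a * c⁻¹ + D c * c⁻¹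

/-- The pseudo-linear map `Tₐ(x) = S(x)a + D(x)`. -/
def sdT {K : Type*} [DivisionRing K] (S : K →+* K) (D : K →+ K) (a x : K) : K :=
  S x * a + D x

/-- `Nᵢ(x)`: `N₀(x) = 1`, `N_{i+1}(x) = S(Nᵢ(x))x + D(Nᵢ(x))`, so that right evaluation
of `f = Σ aᵢtⁱ` at `x` is `f(x) = Σ aᵢ Nᵢ(x)`. -/
def sdN {K : Type*} [DivisionRing K] (S : K →+* K) (D : K →+ K) (x : K) : ℕ → K
  | 0 => 1
  | i + 1 => S (sdN S D x i) * x + D (sdN S D x i)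


lemma sdT_iter_eq {K : Type*} [DivisionRing K] (S : K →+* K) (D : K →+ K)
    (hD : ∀ a b : K, D (a * b) = S a * D b + D a * b)
    (a x : K) (hx : x ≠ 0) (i : ℕ) :
    (sdT S D a)^[i] x = sdN S D (sdConj S D a x) i * x := by
  induction i with
  | zero => simp [sdN]
  | succ i ih =>
    rw [Function.iterate_succ_apply', ih]
    have hconj : sdConj S D a x * x = S x * a + D x := by
      simp only [sdConj, add_mul, mul_assoc, inv_mul_cancel₀ hx, mul_one]
    simp only [sdT, sdN, map_mul, hD, add_mul, mul_assoc]
    rw [hconj, mul_add, add_assoc]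

/-- For `f = Σ aᵢtⁱ` and nonzero `x`, `f(Tₐ)(x) = f(a^x)·x`. -/
theorem eval_pseudoLinear {K : Type*} [DivisionRing K] (S : K →+* K) (D : K →+ K)
    (hD : ∀ a b : K, D (a * b) = S a * D b + D a * b)
    (f : ℕ →₀ K) (a x : K) (hx : x ≠ 0) :
    (f.sum fun i k => k * (sdT S D a)^[i] x) =
      (f.sum fun i k => k * sdN S D (sdConj S D a x) i) * x := by
  rw [Finsupp.sum_mul]
  exact Finsupp.sum_congr fun i _ => by rw [sdT_iter_eq S D hD a x hx, mul_assoc]
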